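/- arXiv:2408.04469 — 3 statements merged into one kernel-verified Lean document; each statement's English description precedes it below -/
import Mathlib

section
/- Let F : ℕ → ℝ be a nonnegative sequence satisfying F(t+1) ≤ (1 - 1/√T) * F(t) + M'/T for all t < T, where T ≥ 1 and M' ≥ 0. Then F(T) ≤ F(0)/√T + M'/√T. -/
theorem stmt_2 (T : ℕ) (hT : 1 ≤ T) (M' : ℝ) (hM' : 0 ≤ M') (F : ℕ → ℝ)
    (hFnonneg : ∀ t, 0 ≤ F t)
    (hrec : ∀ t < T, F (t + 1) ≤ (1 - 1 / Real.sqrt T) * F t + M' / T) :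
    F T ≤ F 0 / Real.sqrt T + M' / Real.sqrt T := by
  set s := Real.sqrt T with hs_def
  have hT0 : (0:ℝ) < T := by exact_mod_cast hT
  have hs1 : 1 ≤ s := by
    rw [hs_def, show (1:ℝ) = Real.sqrt 1 by simp]
    exact Real.sqrt_le_sqrt (by exact_mod_cast hT)
  have hs0 : 0 < s := lt_of_lt_of_le one_pos hs1
  have hss : s * s = (T:ℝ) := Real.mul_self_sqrt (le_of_lt hT0)
  set q : ℝ := 1 - 1 / s with hq_def
  have hq0 : 0 ≤ q := by
    rw [hq_def]
    have : 1 / s ≤ 1 := by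
      rw [div_le_one hs0]; exact hs1
    linarith
  have hq1 : q ≤ 1 := by
    rw [hq_def]
    have : 0 < 1 / s := by positivity
    linarith
  -- main induction
  have key : ∀ n, n ≤ T → F n ≤ q ^ n * F 0 + (M' / T) * ∑ i ∈ Finset.range n, q ^ i := by
    intro n
    induction n with
    | zero => intro _; simp
    | succ k ih =>
      intro hk
      have hkT : k < T := hk
      have ih' := ih (le_of_lt hkT)
      calc F (k + 1) ≤ q * F k + M' / T := hrec k hkT
        _ ≤ q * (q ^ k * F 0 + (M' / T) * ∑ i ∈ Finset.range k, q ^ i) + M' / T := by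
            gcongr
        _ = q ^ (k+1) * F 0 + (M' / T) * (q * ∑ i ∈ Finset.range k, q ^ i + 1) := by ring
        _ = q ^ (k+1) * F 0 + (M' / T) * ∑ i ∈ Finset.range (k+1), q ^ i := by
            congr 1
            rw [geom_sum_succ]
  have hmain := key T le_rfl
  -- q^T ≤ 1/s
  have hx : (1:ℝ) / s ≤ 1 := by rw [div_le_one hs0]; exact hs1
  have hqT : q ^ T ≤ 1 / s := by
    have h1 : q ^ T * (1 + 1/s) ^ T ≤ 1 := by
      have : q * (1 + 1/s) = 1 - (1/s)^2 := by rw [hq_def]; ring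
      rw [← mul_pow, this]
      have h0 : 0 < 1/s := by positivity
      apply pow_le_one₀
      · nlinarith [h0, hx]
      · nlinarith [sq_nonneg (1/s)]
    have h2 : s ≤ (1 + 1/s) ^ T := by
      have hb : 1 + (T:ℝ) * (1/s) ≤ (1 + 1/s) ^ T := by
        have h0' : (0:ℝ) < 1/s := by positivity
        have := one_add_mul_le_pow (a := 1/s) (by linarith : (-2:ℝ) ≤ 1/s) T
        linarith
      have : (T:ℝ) * (1/s) = s := by
        field_simp
        linarith [hss]
      linarith
    have hp : 0 < (1 + 1/s) ^ T := by positivity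
    calc q ^ T ≤ 1 / (1 + 1/s) ^ T := (le_div_iff₀ hp).mpr h1
      _ ≤ 1 / s := one_div_le_one_div_of_le hs0 h2
  -- geometric sum ≤ s
  have hsum : ∑ i ∈ Finset.range T, q ^ i ≤ s := by
    have hq_lt1 : q < 1 := by
      rw [hq_def]; have : 0 < 1/s := by positivity
      linarith
    rw [geom_sum_eq (ne_of_lt hq_lt1) T]
    rw [div_le_iff_of_neg (by linarith : q - 1 < 0)]
    have hqT0 : 0 ≤ q ^ T := pow_nonneg hq0 T
    have hsq : s * (q - 1) = -1 := by
      rw [hq_def]; field_simp; ring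
    linarith
  -- combine
  have hF0 : 0 ≤ F 0 := hFnonneg 0
  calc F T ≤ q ^ T * F 0 + (M' / T) * ∑ i ∈ Finset.range T, q ^ i := hmain
    _ ≤ (1/s) * F 0 + (M' / T) * s := by
        gcongr
    _ = F 0 / s + M' / s := by
        rw [← hss]
        try field_simp
        try ring
end

section
/- Let h : ℝ^m × ℝ^n → ℝ be μ-strongly concave in its second argument with ∇_{ξ'}h(θ, ξ') being L_{ξθ}-Lipschitz in θ, and suppose ∇_θ h(θ, ξ') is L_{θθ}-Lipschitz in θ and L_{θξ}-Lipschitz in ξ'. Define h*(θ) = max_{ξ'} h(θ, ξ'). Then the gradient ∇_θ h*(θ) = ∇_θ h(θ, ξ*(θ)) satisfies ‖∇_θ h*(θ₁) - ∇_θ h*(θ₂)‖ ≤ (L_{θθ} + L_{θξ} L_{ξθ}/μ) ‖θ₁ - θ₂‖. -/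
/-- Danskin-type smoothness: the gradient of the max-function
`h*(θ) = max_{ξ'} h(θ, ξ') = h(θ, ξ*(θ))` is Lipschitz with constant
`L_θθ + L_θξ L_ξθ / μ`. -/
theorem stmt_5 {m n : ℕ}
    (h : EuclideanSpace ℝ (Fin m) → EuclideanSpace ℝ (Fin n) → ℝ)
    (gξ : EuclideanSpace ℝ (Fin m) → EuclideanSpace ℝ (Fin n) → EuclideanSpace ℝ (Fin n))
    (gθ : EuclideanSpace ℝ (Fin m) → EuclideanSpace ℝ (Fin n) → EuclideanSpace ℝ (Fin m))
    (hdiffξ : ∀ θ ξ', HasGradientAt (h θ) (gξ θ ξ') ξ')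
    (hdiffθ : ∀ θ ξ', HasGradientAt (fun a => h a ξ') (gθ θ ξ') θ)
    (μ Lξθ Lθθ Lθξ : ℝ) (hμ : 0 < μ) (hLξθ : 0 ≤ Lξθ) (hLθθ : 0 ≤ Lθθ) (hLθξ : 0 ≤ Lθξ)
    (hconc : ∀ θ x y, h θ y ≤ h θ x + inner ℝ (gξ θ x) (y - x) - μ / 2 * ‖y - x‖ ^ 2)
    (hlipξθ : ∀ θ₁ θ₂ ξ', ‖gξ θ₁ ξ' - gξ θ₂ ξ'‖ ≤ Lξθ * ‖θ₁ - θ₂‖)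
    (hlipθθ : ∀ θ₁ θ₂ ξ', ‖gθ θ₁ ξ' - gθ θ₂ ξ'‖ ≤ Lθθ * ‖θ₁ - θ₂‖)
    (hlipθξ : ∀ θ ξ₁ ξ₂, ‖gθ θ ξ₁ - gθ θ ξ₂‖ ≤ Lθξ * ‖ξ₁ - ξ₂‖)
    (ξstar : EuclideanSpace ℝ (Fin m) → EuclideanSpace ℝ (Fin n))
    (hmax : ∀ θ ξ', h θ ξ' ≤ h θ (ξstar θ))
    (hopt : ∀ θ y, (inner ℝ (gξ θ (ξstar θ)) (y - ξstar θ) : ℝ) ≤ 0) :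
    ∀ θ₁ θ₂, ‖gθ θ₁ (ξstar θ₁) - gθ θ₂ (ξstar θ₂)‖ ≤
      (Lθθ + Lθξ * Lξθ / μ) * ‖θ₁ - θ₂‖ := by
  intro θ₁ θ₂
  set A := ξstar θ₁ with hA
  set B := ξstar θ₂ with hB
  -- strong monotonicity at θ₁
  have h1 := hconc θ₁ A B
  have h2 := hconc θ₁ B A
  have hnorm : ‖A - B‖ = ‖B - A‖ := by rw [← norm_neg]; congr 1; abel
  have hmono : μ * ‖B - A‖ ^ 2 ≤
      (inner ℝ (gξ θ₁ A) (B - A) : ℝ) + (inner ℝ (gξ θ₁ B) (A - B) : ℝ) := by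
    rw [hnorm] at h2
    linarith
  have hopt1 : (inner ℝ (gξ θ₁ A) (B - A) : ℝ) ≤ 0 := hopt θ₁ B
  have hopt2 : (inner ℝ (gξ θ₂ B) (A - B) : ℝ) ≤ 0 := hopt θ₂ A
  have hsplit : (inner ℝ (gξ θ₁ B) (A - B) : ℝ) =
      (inner ℝ (gξ θ₁ B - gξ θ₂ B) (A - B) : ℝ) + (inner ℝ (gξ θ₂ B) (A - B) : ℝ) := by
    rw [inner_sub_left]; ring
  have hcs : (inner ℝ (gξ θ₁ B - gξ θ₂ B) (A - B) : ℝ) ≤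
      (Lξθ * ‖θ₁ - θ₂‖) * ‖B - A‖ := by
    calc (inner ℝ (gξ θ₁ B - gξ θ₂ B) (A - B) : ℝ)
        ≤ ‖gξ θ₁ B - gξ θ₂ B‖ * ‖A - B‖ := real_inner_le_norm _ _
      _ ≤ (Lξθ * ‖θ₁ - θ₂‖) * ‖B - A‖ := by
          rw [hnorm]
          exact mul_le_mul_of_nonneg_right (hlipξθ θ₁ θ₂ B) (norm_nonneg _)
  have hkey : μ * ‖B - A‖ ^ 2 ≤ (Lξθ * ‖θ₁ - θ₂‖) * ‖B - A‖ := by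
    nlinarith [hmono, hopt1, hopt2, hsplit, hcs]
  have hdist : ‖B - A‖ ≤ Lξθ / μ * ‖θ₁ - θ₂‖ := by
    rcases eq_or_lt_of_le (norm_nonneg (B - A)) with h0 | h0
    · rw [← h0]
      positivity
    · rw [div_mul_eq_mul_div, le_div_iff₀ hμ]
      nlinarith [hkey]
  calc ‖gθ θ₁ A - gθ θ₂ B‖
      ≤ ‖gθ θ₁ A - gθ θ₂ A‖ + ‖gθ θ₂ A - gθ θ₂ B‖ := by
        have : gθ θ₁ A - gθ θ₂ B = (gθ θ₁ A - gθ θ₂ A) + (gθ θ₂ A - gθ θ₂ B) := by abel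
        rw [this]; exact norm_add_le _ _
    _ ≤ Lθθ * ‖θ₁ - θ₂‖ + Lθξ * ‖A - B‖ := by
        gcongr
        exacts [hlipθθ θ₁ θ₂ A, hlipθξ θ₂ A B]
    _ ≤ Lθθ * ‖θ₁ - θ₂‖ + Lθξ * (Lξθ / μ * ‖θ₁ - θ₂‖) := by
        have h3 : ‖A - B‖ ≤ Lξθ / μ * ‖θ₁ - θ₂‖ := hnorm ▸ hdist
        gcongr
    _ = (Lθθ + Lθξ * Lξθ / μ) * ‖θ₁ - θ₂‖ := by ring
end

section
/- Let f_t : ℝ^m → ℝ be convex differentiable functions, and let x_{t+1} = x_t − α g_t be iterates where g_t is a subgradient/gradient of f_t at x_t with ‖g_t‖² ≤ M. Then for any u, the regret satisfies ∑_{t=1}^T (f_t(x_t) − f_t(u)) ≤ ‖x₁ − u‖²/(2α) + α M T / 2; in particular with α = c/√T the regret is O(√T). -/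
open Finset

lemma grad_ineq {m : ℕ} {f : EuclideanSpace ℝ (Fin m) → ℝ}
    {x gx u : EuclideanSpace ℝ (Fin m)}
    (hconv : ConvexOn ℝ Set.univ f) (hgrad : HasGradientAt f gx x) :
    f x - f u ≤ inner ℝ gx (x - u) := by
  set φ : ℝ → ℝ := f ∘ (AffineMap.lineMap x u : ℝ →ᵃ[ℝ] _) with hφ
  have hφconv : ConvexOn ℝ Set.univ φ := by
    have := hconv.comp_affineMap (AffineMap.lineMap x u : ℝ →ᵃ[ℝ] _)
    simpa [hφ] using this
  have hcurve : HasDerivAt (fun s : ℝ => (AffineMap.lineMap x u : ℝ →ᵃ[ℝ] _) s) (u - x) 0 := by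
    simp only [AffineMap.coe_lineMap]
    simpa using ((hasDerivAt_id (0:ℝ)).smul_const (u - x)).add_const x
  have hd : HasDerivAt φ (inner ℝ gx (u - x) : ℝ) 0 := by
    have h0 : (AffineMap.lineMap x u : ℝ →ᵃ[ℝ] _) (0:ℝ) = x := by
      simp [AffineMap.lineMap_apply]
    have := hgrad.hasFDerivAt
    rw [← h0] at this
    have hcomp := this.comp_hasDerivAt 0 hcurve
    simpa [hφ, InnerProductSpace.toDual_apply_apply] using hcomp
  have hs := hφconv.le_slope_of_hasDerivAt (Set.mem_univ (0:ℝ)) (Set.mem_univ (1:ℝ))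
    one_pos hd
  have hslope : slope φ 0 1 = f u - f x := by
    simp [slope_def_field, hφ, AffineMap.lineMap_apply]
  rw [hslope] at hs
  have : (inner ℝ gx (x - u) : ℝ) = - inner ℝ gx (u - x) := by
    rw [← inner_neg_right]; congr 1; abel
  rw [this]; linarith

/-- Online gradient descent regret bound: with convex losses, gradients bounded
by `‖g_t‖² ≤ M`, and constant step size α, the regret against any comparator `u`
is at most `‖x₀ − u‖²/(2α) + αMT/2`. -/
theorem stmt_16 {m : ℕ} (f : ℕ → EuclideanSpace ℝ (Fin m) → ℝ)
    (x g : ℕ → EuclideanSpace ℝ (Fin m)) (α M : ℝ) (hα : 0 < α) (T : ℕ)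
    (hconv : ∀ t, ConvexOn ℝ Set.univ (f t))
    (hgrad : ∀ t, HasGradientAt (f t) (g t) (x t))
    (hM : ∀ t, ‖g t‖ ^ 2 ≤ M)
    (hupd : ∀ t, x (t + 1) = x t - α • g t) :
    ∀ u, ∑ t ∈ Finset.range T, (f t (x t) - f t u) ≤
      ‖x 0 - u‖ ^ 2 / (2 * α) + α * M * T / 2 := by
  intro u
  set D : ℕ → ℝ := fun t => ‖x t - u‖ ^ 2 with hD
  have key : ∀ t, f t (x t) - f t u ≤ (D t - D (t + 1)) / (2 * α) + α * M / 2 := by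
    intro t
    have h1 : f t (x t) - f t u ≤ inner ℝ (g t) (x t - u) :=
      grad_ineq (hconv t) (hgrad t)
    have h2 : D (t + 1) = D t - 2 * α * inner ℝ (g t) (x t - u) + α ^ 2 * ‖g t‖ ^ 2 := by
      have : x (t + 1) - u = (x t - u) - α • g t := by rw [hupd t]; abel
      rw [hD]; simp only [this]
      rw [norm_sub_sq_real, real_inner_smul_right, norm_smul]
      rw [real_inner_comm]
      simp [mul_pow, abs_of_pos hα]
      ring
    have h3 : (inner ℝ (g t) (x t - u) : ℝ)
        = (D t - D (t + 1)) / (2 * α) + α * ‖g t‖ ^ 2 / 2 := by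
      rw [h2]; field_simp; ring
    have h4 : α * ‖g t‖ ^ 2 / 2 ≤ α * M / 2 := by
      have := hM t; nlinarith
    linarith
  calc ∑ t ∈ Finset.range T, (f t (x t) - f t u)
      ≤ ∑ t ∈ Finset.range T, ((D t - D (t + 1)) / (2 * α) + α * M / 2) :=
        Finset.sum_le_sum fun t _ => key t
    _ = (D 0 - D T) / (2 * α) + α * M * T / 2 := by
        rw [Finset.sum_add_distrib, ← Finset.sum_div, Finset.sum_range_sub' D]
        simp; ring
    _ ≤ ‖x 0 - u‖ ^ 2 / (2 * α) + α * M * T / 2 := by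
        have hDT : 0 ≤ D T := sq_nonneg _
        have hD0 : D 0 = ‖x 0 - u‖ ^ 2 := rfl
        have h2α : (0:ℝ) < 2 * α := by linarith
        have : (D 0 - D T) / (2 * α) ≤ ‖x 0 - u‖ ^ 2 / (2 * α) := by
          rw [← hD0]; gcongr
          linarith
        linarith
end
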